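/- arXiv:1110.1849 — 2 statements merged into one kernel-verified Lean document; each statement's English description precedes it below -/
import Mathlib

section
/- Let Q be a finite connected quandle with its elements {1,2,…,n} naturally ordered and with profile {1, ℓ_1, ℓ_2, …, ℓ_k}, where 1 ≤ ℓ_1 < ℓ_2 < ⋯ < ℓ_k. Then the number of distinct quandle matrices in canonical form obtained from Q by reorderings (that is, the number of distinct quandle matrices obtained after reordering by μ, where μ ranges over all natural reorderings with respect to r_q for all q ∈ Q) is at most ℓ_1 ℓ_2 ⋯ ℓ_{k-1}. -/
/-- A quandle structure on a set `Q`: a binary operation `op` that is idempotent,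
right-invertible (each right translation `r_b : x ↦ x * b` is a bijection) and
right-distributive. -/
structure QuandleOp (Q : Type*) where
  op : Q → Q → Q
  op_self : ∀ a, op a a = a
  op_bijective : ∀ b, Function.Bijective fun a => op a b
  op_distrib : ∀ a b c, op (op a b) c = op (op a c) (op b c)

namespace QuandleOp

/-- The right translation `r_b : x ↦ x * b`, as a permutation of `Q`. -/
noncomputable def r {Q : Type*} (S : QuandleOp Q) (b : Q) : Equiv.Perm Q :=
  Equiv.ofBijective _ (S.op_bijective b)

/-- A quandle is connected if every element can be taken to every other element by a
finite composition of the maps `r_b` and their inverses, i.e. by an element of the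
subgroup of permutations generated by the `r_b`. -/
def Connected {Q : Type*} (S : QuandleOp Q) : Prop :=
  ∀ a b : Q, ∃ g ∈ Subgroup.closure (Set.range S.r), g a = b

end QuandleOp

/-- The element `n` of the quandle `{1, …, n}` modelled as `Fin n` (element `m`
corresponds to the index `m - 1`). -/
def theTop (n : ℕ) [NeZero n] : Fin n :=
  ⟨n - 1, Nat.sub_lt (Nat.pos_of_ne_zero (NeZero.ne n)) Nat.one_pos⟩

/-- `ν` is a natural reordering with respect to `r q`, realized by the presentation of
`r q` as the product of the disjoint cycles `(I s 0  I s 1 … I s (ℓ s - 1))` for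
`s = 0, …, k-1` together with the fixed point `(q)`, where `1 ≤ ℓ 0 ≤ ⋯ ≤ ℓ (k-1)`:
it sends `q` to the top element `n` (index `n - 1`) and sends the `t`-th entry of the
`s`-th cycle to the element with index `(ℓ 0 + ⋯ + ℓ (s-1)) + t`. -/
def IsNaturalReorderingWith {n : ℕ} (S : QuandleOp (Fin n)) (q : Fin n)
    (ν : Equiv.Perm (Fin n)) {k : ℕ} (ℓ : Fin k → ℕ)
    (I : (s : Fin k) → Fin (ℓ s) → Fin n) : Prop :=
  (ν q).val = n - 1 ∧
  (∀ s, 1 ≤ ℓ s) ∧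
  Monotone ℓ ∧
  (∑ s, ℓ s) = n - 1 ∧
  Function.Injective (fun p : (s : Fin k) × Fin (ℓ s) => I p.1 p.2) ∧
  (∀ (s : Fin k) (t : Fin (ℓ s)), I s t ≠ q) ∧
  (∀ (s : Fin k) (t : Fin (ℓ s)),
    S.op (I s t) q = I s ⟨(t.val + 1) % ℓ s, Nat.mod_lt _ (Nat.zero_lt_of_lt t.isLt)⟩) ∧
  (∀ (s : Fin k) (t : Fin (ℓ s)),
    (ν (I s t)).val = (∑ j ∈ Finset.Iio s, ℓ j) + t.val)

/-- `ν` is a natural reordering with respect to `r q` (for some presentation of `r q`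
as a product of disjoint cycles of weakly increasing lengths, together with `(q)`). -/
def IsNaturalReordering {n : ℕ} (S : QuandleOp (Fin n)) (q : Fin n)
    (ν : Equiv.Perm (Fin n)) : Prop :=
  ∃ (k : ℕ) (ℓ : Fin k → ℕ) (I : (s : Fin k) → Fin (ℓ s) → Fin n),
    IsNaturalReorderingWith S q ν ℓ I

/-- The elements of the quandle are naturally ordered with cycle lengths `ℓ`:
`r n` is decomposed into disjoint cycles in form (N), i.e. the identity reordering is a
natural reordering with respect to `r n` with cycle lengths `ℓ`.  (This also says that
the profile of the quandle is `{1, ℓ 0, …, ℓ (k-1)}`.) -/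
def NaturallyOrderedWith {n : ℕ} [NeZero n] (S : QuandleOp (Fin n)) {k : ℕ}
    (ℓ : Fin k → ℕ) : Prop :=
  ∃ I, IsNaturalReorderingWith S (theTop n) (Equiv.refl (Fin n)) ℓ I

/-- The elements of the quandle are naturally ordered (the quandle matrix is in
canonical form). -/
def NaturallyOrdered {n : ℕ} [NeZero n] (S : QuandleOp (Fin n)) : Prop :=
  ∃ (k : ℕ) (ℓ : Fin k → ℕ), NaturallyOrderedWith S ℓ

/-- The quandle operation (equivalently, the quandle matrix) obtained after reordering
the elements by the bijection `ν`: the new matrix has entry `ν (i * j)` in row `ν i`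
and column `ν j`. -/
def reorderedOp {n : ℕ} (S : QuandleOp (Fin n)) (ν : Equiv.Perm (Fin n)) :
    Fin n → Fin n → Fin n :=
  fun i j => ν (S.op (ν.symm i) (ν.symm j))

section Aux

namespace QuandleOp

variable {n : ℕ} (S : QuandleOp (Fin n))

lemma r_apply (b x : Fin n) : S.r b x = S.op x b := rfl

lemma hom_of_mem_closure {g : Equiv.Perm (Fin n)}
    (hg : g ∈ Subgroup.closure (Set.range S.r)) :
    ∀ a b : Fin n, g (S.op a b) = S.op (g a) (g b) := by
  induction hg using Subgroup.closure_induction with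
  | mem x hx =>
    intro a b
    obtain ⟨c, rfl⟩ := hx
    simp only [r_apply]
    exact S.op_distrib a b c
  | one => intro a b; rfl
  | mul x y hx hy ihx ihy =>
    intro a b
    simp only [Equiv.Perm.mul_apply, ihy, ihx]
  | inv x hx ih =>
    intro a b
    have := ih (x⁻¹ a) (x⁻¹ b)
    simp only [Equiv.Perm.coe_inv, Equiv.apply_symm_apply] at this
    rw [← this, Equiv.Perm.coe_inv, Equiv.symm_apply_apply]

end QuandleOp

end Aux
section Aux2

open QuandleOp

variable {n : ℕ} {S : QuandleOp (Fin n)} {q : Fin n} {ν : Equiv.Perm (Fin n)}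
  {k : ℕ} {ℓ : Fin k → ℕ} {I : (s : Fin k) → Fin (ℓ s) → Fin n}

lemma nrw_lpos (h : IsNaturalReorderingWith S q ν ℓ I) (s : Fin k) : 0 < ℓ s :=
  h.2.1 s

/-- L1: powers of `r q` rotate each cycle. -/
lemma nrw_pow_apply (h : IsNaturalReorderingWith S q ν ℓ I) (s : Fin k)
    (t : Fin (ℓ s)) (m : ℕ) :
    ((S.r q) ^ m) (I s t) = I s ⟨(t.val + m) % ℓ s, Nat.mod_lt _ (nrw_lpos h s)⟩ := by
  induction m with
  | zero =>
    simp only [pow_zero, Equiv.Perm.coe_one, id_eq]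
    congr 1
    exact Fin.ext (by simp [Nat.mod_eq_of_lt t.isLt])
  | succ m ih =>
    rw [pow_succ', Equiv.Perm.mul_apply, ih, r_apply, h.2.2.2.2.2.2.1]
    congr 1
    exact Fin.ext (by simp [Nat.mod_add_mod, Nat.add_assoc])

/-- L3: injectivity within / across cycles. -/
lemma nrw_inj (h : IsNaturalReorderingWith S q ν ℓ I) {s s' : Fin k}
    {t : Fin (ℓ s)} {t' : Fin (ℓ s')} (e : I s t = I s' t') :
    s = s' ∧ t.val = t'.val := by
  have := h.2.2.2.2.1 (a₁ := ⟨s, t⟩) (a₂ := ⟨s', t'⟩) e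
  obtain ⟨rfl, ht⟩ := Sigma.mk.inj_iff.mp this
  exact ⟨rfl, congrArg Fin.val (eq_of_heq ht)⟩

/-- L2: the cycles cover everything except `q`. -/
lemma nrw_surj (h : IsNaturalReorderingWith S q ν ℓ I) {x : Fin n} (hx : x ≠ q) :
    ∃ (s : Fin k) (t : Fin (ℓ s)), I s t = x := by
  classical
  have hn : 0 < n := Fin.pos q
  set T : Finset (Fin n) :=
    Finset.univ.image (fun p : (s : Fin k) × Fin (ℓ s) => I p.1 p.2) with hT
  have hcardT : T.card = n - 1 := by
    rw [hT, Finset.card_image_of_injective _ h.2.2.2.2.1, Finset.card_univ,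
      Fintype.card_sigma]
    simpa using h.2.2.2.1
  have hsub : T ⊆ Finset.univ.erase q := by
    intro y hy
    rw [hT, Finset.mem_image] at hy
    obtain ⟨p, _, rfl⟩ := hy
    exact Finset.mem_erase.mpr ⟨h.2.2.2.2.2.1 p.1 p.2, Finset.mem_univ _⟩
  have hcard' : (Finset.univ.erase q).card = n - 1 := by
    rw [Finset.card_erase_of_mem (Finset.mem_univ q), Finset.card_univ, Fintype.card_fin]
  have hTeq : T = Finset.univ.erase q := Finset.eq_of_subset_of_card_le hsub (by omega)
  have : x ∈ T := by
    rw [hTeq]; exact Finset.mem_erase.mpr ⟨hx, Finset.mem_univ _⟩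
  rw [hT, Finset.mem_image] at this
  obtain ⟨p, _, hp⟩ := this
  exact ⟨p.1, p.2, hp⟩

/-- L7: `q` is fixed by powers of `r q`. -/
lemma r_pow_fix (S : QuandleOp (Fin n)) (q : Fin n) (m : ℕ) : ((S.r q) ^ m) q = q := by
  induction m with
  | zero => rfl
  | succ m ih => rw [pow_succ, Equiv.Perm.mul_apply, r_apply, S.op_self, ih]

/-- L4: transfer along a quandle automorphism. -/
lemma nrw_transfer (h : IsNaturalReorderingWith S q ν ℓ I) {g : Equiv.Perm (Fin n)}
    (hg : g ∈ Subgroup.closure (Set.range S.r)) :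
    IsNaturalReorderingWith S (g⁻¹ q) (ν * g) ℓ (fun s t => g⁻¹ (I s t)) := by
  obtain ⟨h1, h2, h3, h4, h5, h6, h7, h8⟩ := h
  have hginv : g⁻¹ ∈ Subgroup.closure (Set.range S.r) := inv_mem hg
  refine ⟨?_, h2, h3, h4, ?_, ?_, ?_, ?_⟩
  · simpa [Equiv.Perm.mul_apply] using h1
  · intro p p' hpp
    exact h5 (g⁻¹.injective hpp)
  · intro s t hst
    exact h6 s t (g⁻¹.injective hst)
  · intro s t
    rw [← S.hom_of_mem_closure hginv, h7]
  · intro s t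
    simpa [Equiv.Perm.mul_apply] using h8 s t

/-- L5: reordered matrix is unchanged by precomposition with an automorphism. -/
lemma reorderedOp_mul {μ g : Equiv.Perm (Fin n)}
    (hg : g ∈ Subgroup.closure (Set.range S.r)) :
    reorderedOp S (μ * g) = reorderedOp S μ := by
  funext i j
  simp only [reorderedOp, Equiv.Perm.mul_apply, Equiv.Perm.mul_def,
    Equiv.symm_trans_apply, Equiv.trans_apply, S.hom_of_mem_closure hg,
    Equiv.apply_symm_apply]

/-- L6: a natural reordering is determined by its data. -/
lemma nrw_unique {μ₁ μ₂ : Equiv.Perm (Fin n)}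
    (h₁ : IsNaturalReorderingWith S q μ₁ ℓ I)
    (h₂ : IsNaturalReorderingWith S q μ₂ ℓ I) : μ₁ = μ₂ := by
  ext x
  rcases eq_or_ne x q with rfl | hx
  · exact h₁.1.trans h₂.1.symm
  · obtain ⟨s, t, rfl⟩ := nrw_surj h₁ hx
    exact (h₁.2.2.2.2.2.2.2 s t).trans (h₂.2.2.2.2.2.2.2 s t).symm

end Aux2
section Aux3

open QuandleOp

lemma mod_eq_self_dvd {t L M : ℕ} (ht : t < M) (h : (t + L) % M = t) : M ∣ L := by
  have h' : (t + L) % M = (t + 0) % M := by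
    simpa [Nat.mod_eq_of_lt ht] using h
  exact (Nat.modEq_zero_iff_dvd).mp (Nat.ModEq.add_left_cancel' t h')

variable {n : ℕ} {S : QuandleOp (Fin n)} {q : Fin n} {ν₀ ν₁ : Equiv.Perm (Fin n)}
  {k k₁ : ℕ} {ℓ : Fin k → ℕ} {I₀ : (s : Fin k) → Fin (ℓ s) → Fin n}
  {ℓ₁ : Fin k₁ → ℕ} {I₁ : (s : Fin k₁) → Fin (ℓ₁ s) → Fin n}

/-- the length of a cycle through a point divides the length of any other
presentation's cycle through the same point -/
lemma nrw_dvd (h₀ : IsNaturalReorderingWith S q ν₀ ℓ I₀)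
    (h₁ : IsNaturalReorderingWith S q ν₁ ℓ₁ I₁)
    {s : Fin k} {u : Fin (ℓ s)} {s' : Fin k₁} {t' : Fin (ℓ₁ s')}
    (e : I₀ s u = I₁ s' t') : ℓ₁ s' ∣ ℓ s := by
  have e₀ := nrw_pow_apply h₀ s u (ℓ s)
  have e₁ := nrw_pow_apply h₁ s' t' (ℓ s)
  rw [e] at e₀
  rw [e₀] at e₁
  have hmod : (u.val + ℓ s) % ℓ s = u.val := by
    rw [Nat.add_mod_right, Nat.mod_eq_of_lt u.isLt]
  have : I₀ s ⟨(u.val + ℓ s) % ℓ s, Nat.mod_lt _ (nrw_lpos h₀ s)⟩ = I₁ s' t' := by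
    rw [← e]; congr 1; exact Fin.ext hmod
  rw [this] at e₁
  exact mod_eq_self_dvd t'.isLt (nrw_inj h₁ e₁).2.symm

lemma nrw_len_eq (h₀ : IsNaturalReorderingWith S q ν₀ ℓ I₀)
    (h₁ : IsNaturalReorderingWith S q ν₁ ℓ₁ I₁)
    {s : Fin k} {u : Fin (ℓ s)} {s' : Fin k₁} {t' : Fin (ℓ₁ s')}
    (e : I₀ s u = I₁ s' t') : ℓ s = ℓ₁ s' :=
  Nat.dvd_antisymm (nrw_dvd h₁ h₀ e.symm) (nrw_dvd h₀ h₁ e)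

/-- two points of `I₁`-cycles in the same `I₀`-cycle lie in the same `I₁`-cycle -/
lemma nrw_same_cycle (h₁ : IsNaturalReorderingWith S q ν₁ ℓ₁ I₁)
    {s : Fin k} {u v : Fin (ℓ s)} {a b : Fin k₁} {t : Fin (ℓ₁ a)} {t' : Fin (ℓ₁ b)}
    (ea : I₀ s u = I₁ a t) (eb : I₀ s v = I₁ b t')
    (h₀ : IsNaturalReorderingWith S q ν₀ ℓ I₀) : a = b := by
  set m := v.val + ℓ s - u.val with hm
  have e₀ := nrw_pow_apply h₀ s u m
  have e₁ := nrw_pow_apply h₁ a t m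
  rw [ea] at e₀
  rw [e₀] at e₁
  have hmod : (u.val + m) % ℓ s = v.val := by
    have : u.val + m = v.val + ℓ s := by
      have := u.isLt; omega
    rw [this, Nat.add_mod_right, Nat.mod_eq_of_lt v.isLt]
  have : I₀ s ⟨(u.val + m) % ℓ s, Nat.mod_lt _ (nrw_lpos h₀ s)⟩ = I₁ b t' := by
    rw [← eb]; congr 1; exact Fin.ext hmod
  rw [this] at e₁
  exact ((nrw_inj h₁ e₁).1).symm

/-- a strictly monotone self-map of `Fin k` is the identity -/
lemma fin_strictMono_eq_id {k : ℕ} {σ : Fin k → Fin k} (h : StrictMono σ) :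
    ∀ i, σ i = i := by
  intro i
  haveI : WellFoundedLT (Fin k) := Finite.to_wellFoundedLT
  have hbij : Function.Bijective σ :=
    (Finite.injective_iff_bijective).mp h.injective
  set e := Equiv.ofBijective σ hbij with he
  have hcoe : ∀ x, e x = σ x := fun x => rfl
  have hsymm : StrictMono e.symm := by
    intro a b hab
    by_contra hle
    push_neg at hle
    have h2 := h.monotone hle
    rw [← hcoe, ← hcoe, e.apply_symm_apply, e.apply_symm_apply] at h2
    exact absurd hab (not_lt.mpr h2)
  have h1 : i ≤ σ i := h.le_apply
  have h2 : σ i ≤ e.symm (σ i) := hsymm.le_apply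
  have h3 : e.symm (σ i) = i := by
    rw [← hcoe, e.symm_apply_apply]
  rw [h3] at h2
  exact le_antisymm h2 h1

end Aux3
section Aux4

open QuandleOp

variable {n : ℕ} {S : QuandleOp (Fin n)} {q : Fin n} {ν₀ ν₁ : Equiv.Perm (Fin n)}
  {k k₁ : ℕ} {ℓ : Fin k → ℕ} {I₀ : (s : Fin k) → Fin (ℓ s) → Fin n}
  {ℓ₁ : Fin k₁ → ℕ} {I₁ : (s : Fin k₁) → Fin (ℓ₁ s) → Fin n}

lemma nrw_sigma_exists (h₀ : IsNaturalReorderingWith S q ν₀ ℓ I₀)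
    (h₁ : IsNaturalReorderingWith S q ν₁ ℓ₁ I₁) :
    ∃ σ : Fin k₁ → Fin k, Function.Injective σ ∧ ∀ s', ℓ₁ s' = ℓ (σ s') := by
  classical
  have hex : ∀ s' : Fin k₁, ∃ p : (s : Fin k) × Fin (ℓ s),
      I₀ p.1 p.2 = I₁ s' ⟨0, nrw_lpos h₁ s'⟩ := by
    intro s'
    obtain ⟨s, t, ht⟩ := nrw_surj h₀ (h₁.2.2.2.2.2.1 s' ⟨0, nrw_lpos h₁ s'⟩)
    exact ⟨⟨s, t⟩, ht⟩
  choose p hp using hex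
  refine ⟨fun s' => (p s').1, ?_, fun s' => (nrw_len_eq h₀ h₁ (hp s')).symm⟩
  intro a b e
  simp only at e
  have hb : ∃ u : Fin (ℓ ((p b).1)), I₀ ((p b).1) u = I₁ a ⟨0, nrw_lpos h₁ a⟩ := by
    rw [← e]
    exact ⟨(p a).2, hp a⟩
  obtain ⟨u, hu⟩ := hb
  exact nrw_same_cycle h₁ hu (hp b) h₀

lemma nrw_cycle_type (hstrict : StrictMono ℓ)
    (h₀ : IsNaturalReorderingWith S q ν₀ ℓ I₀)
    (h₁ : IsNaturalReorderingWith S q ν₁ ℓ₁ I₁) :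
    k₁ = k ∧ HEq ℓ₁ ℓ := by
  obtain ⟨σ, hσinj, hσ⟩ := nrw_sigma_exists h₀ h₁
  obtain ⟨τ, hτinj, hτ⟩ := nrw_sigma_exists h₁ h₀
  have hk : k₁ = k := le_antisymm
    (by simpa using Fintype.card_le_of_injective σ hσinj)
    (by simpa using Fintype.card_le_of_injective τ hτinj)
  subst hk
  refine ⟨rfl, heq_of_eq (funext fun s => ?_)⟩
  have hmono : Monotone σ := by
    intro a b hab
    have := h₁.2.2.1 hab
    rw [hσ a, hσ b] at this
    exact hstrict.le_iff_le.mp this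
  have hsm : StrictMono σ := hmono.strictMono_of_injective hσinj
  rw [hσ s, fin_strictMono_eq_id hsm s]

end Aux4
/-- Corollary `AtMost` of the paper: let the elements of a finite
connected quandle on `{1,…,n}` be naturally ordered, with profile
`{1, ℓ 0, …, ℓ (k-1)}` where `1 ≤ ℓ 0 < ℓ 1 < ⋯ < ℓ (k-1)`.  Then the number of
distinct quandle matrices obtained by natural reorderings is at most
`ℓ 0 * ℓ 1 * ⋯ * ℓ (k-2)`. -/
theorem card_canonical_matrices_le
    {n k : ℕ} [NeZero n] (hk : 0 < k) (S : QuandleOp (Fin n)) (hconn : S.Connected)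
    (ℓ : Fin k → ℕ) (hstrict : StrictMono ℓ) (hord : NaturallyOrderedWith S ℓ) :
    {f : Fin n → Fin n → Fin n |
        ∃ (μ : Equiv.Perm (Fin n)) (q : Fin n),
          IsNaturalReordering S q μ ∧ f = reorderedOp S μ}.ncard
      ≤ ∏ j ∈ Finset.Iio (⟨k - 1, by omega⟩ : Fin k), ℓ j := by
  classical
  obtain ⟨I₀, h₀⟩ := hord
  set q₀ := theTop n with hq₀
  have hlpos : ∀ s, 0 < ℓ s := nrw_lpos h₀
  set last : Fin k := ⟨k - 1, by omega⟩ with hlast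
  set msz : Fin k → ℕ := fun s => if s = last then 1 else ℓ s with hmsz
  have hmpos : ∀ s, 0 < msz s := by
    intro s
    simp only [hmsz]
    split
    · exact one_pos
    · exact hlpos s
  set Ic : ((s : Fin k) → Fin (ℓ s)) → (s : Fin k) → Fin (ℓ s) → Fin n :=
    fun c s t => I₀ s ⟨((c s).val + t.val) % ℓ s, Nat.mod_lt _ (hlpos s)⟩ with hIc
  set crec : ((s : Fin k) → Fin (msz s)) → (s : Fin k) → Fin (ℓ s) :=
    fun d s => ⟨(d s).val % ℓ s, Nat.mod_lt _ (hlpos s)⟩ with hcrec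
  set H : ((s : Fin k) → Fin (msz s)) → (Fin n → Fin n → Fin n) := fun d =>
    if h : ∃ μ', IsNaturalReorderingWith S q₀ μ' ℓ (Ic (crec d)) then
      reorderedOp S h.choose
    else fun _ _ => q₀ with hH
  have hsub : {f : Fin n → Fin n → Fin n |
        ∃ (μ : Equiv.Perm (Fin n)) (q : Fin n),
          IsNaturalReordering S q μ ∧ f = reorderedOp S μ} ⊆ Set.range H := by
    rintro f ⟨μ, q, ⟨k₁, ℓ₁, I₁, h₁⟩, rfl⟩
    obtain ⟨g, hgmem, hgq⟩ := hconn q₀ q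
    have h₂ := nrw_transfer h₁ hgmem
    have hq : g⁻¹ q = q₀ := by rw [← hgq, Equiv.Perm.coe_inv, Equiv.symm_apply_apply]
    rw [hq] at h₂
    -- cycle types match
    obtain ⟨hkk, hheq⟩ := nrw_cycle_type hstrict h₀ h₂
    have hkk' : k = k₁ := hkk.symm
    subst hkk'
    have hle : ℓ = ℓ₁ := (eq_of_heq hheq).symm
    subst hle
    -- find the shifts c
    have hcex : ∀ s : Fin k, ∃ u : Fin (ℓ s),
        I₀ s u = g⁻¹ (I₁ s ⟨0, hlpos s⟩) := by
      intro s
      obtain ⟨s₂, u, hu⟩ := nrw_surj h₀ (h₂.2.2.2.2.2.1 s ⟨0, hlpos s⟩)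
      have hs : s₂ = s := hstrict.injective (nrw_len_eq h₀ h₂ hu)
      subst hs
      exact ⟨u, hu⟩
    choose c hc using hcex
    have hI₂c : ∀ (s : Fin k) (t : Fin (ℓ s)),
        g⁻¹ (I₁ s t) = Ic c s t := by
      intro s t
      have e₁ := nrw_pow_apply h₂ s ⟨0, hlpos s⟩ t.val
      have e₀ := nrw_pow_apply h₀ s (c s) t.val
      simp only at e₁
      rw [← hc s, e₀] at e₁
      have ht0 : (⟨(0 + t.val) % ℓ s, Nat.mod_lt _ (hlpos s)⟩ : Fin (ℓ s)) = t :=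
        Fin.ext (by simp only [Nat.zero_add]; exact Nat.mod_eq_of_lt t.isLt)
      rw [ht0] at e₁
      rw [hIc]
      exact e₁.symm
    -- normalize the shift of the last (longest) cycle to 0
    set m : ℕ := ℓ last - (c last).val with hm
    set g₀ : Equiv.Perm (Fin n) := (S.r q₀) ^ m with hg₀
    have hg₀mem : g₀ ∈ Subgroup.closure (Set.range S.r) :=
      Subgroup.pow_mem _ (Subgroup.subset_closure (Set.mem_range_self q₀)) m
    have h₃ := nrw_transfer h₂ (inv_mem hg₀mem)
    simp only [inv_inv] at h₃
    rw [r_pow_fix S q₀ m] at h₃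
    set c' : (s : Fin k) → Fin (ℓ s) :=
      fun s => ⟨((c s).val + m) % ℓ s, Nat.mod_lt _ (hlpos s)⟩ with hc'
    have hJ : (fun (s : Fin k) (t : Fin (ℓ s)) => g₀ (g⁻¹ (I₁ s t))) = Ic c' := by
      funext s t
      rw [hI₂c s t]
      simp only [hIc, hg₀]
      rw [nrw_pow_apply h₀ s _ m]
      congr 1
      refine Fin.ext ?_
      simp only [hc']
      rw [Nat.mod_add_mod, Nat.mod_add_mod, Nat.add_right_comm]
    rw [hJ] at h₃
    have hc'last : (c' last).val = 0 := by
      have hlt := (c last).isLt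
      simp only [hc']
      rw [show (c last).val + m = ℓ last by omega, Nat.mod_self]
    set d : (s : Fin k) → Fin (msz s) :=
      fun s => ⟨(c' s).val % msz s, Nat.mod_lt _ (hmpos s)⟩ with hd
    have hrec : crec d = c' := by
      funext s
      refine Fin.ext ?_
      show (c' s).val % msz s % ℓ s = (c' s).val
      rcases eq_or_ne s last with rfl | hs
      · rw [hc'last]
        simp
      · have hms : msz s = ℓ s := by simp only [hmsz]; rw [if_neg hs]
        rw [hms, Nat.mod_eq_of_lt (c' s).isLt, Nat.mod_eq_of_lt (c' s).isLt]
    have hex' : ∃ μ', IsNaturalReorderingWith S q₀ μ' ℓ (Ic (crec d)) :=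
      ⟨(μ * g) * g₀⁻¹, by rw [hrec]; exact h₃⟩
    refine ⟨d, ?_⟩
    simp only [hH]
    rw [dif_pos hex']
    have hspec := hex'.choose_spec
    have h₃' : IsNaturalReorderingWith S q₀ (μ * g * g₀⁻¹) ℓ (Ic (crec d)) := by
      rw [hrec]; exact h₃
    rw [nrw_unique hspec h₃', reorderedOp_mul (inv_mem hg₀mem), reorderedOp_mul hgmem]
  -- counting
  have h1 : {f : Fin n → Fin n → Fin n |
        ∃ (μ : Equiv.Perm (Fin n)) (q : Fin n),
          IsNaturalReordering S q μ ∧ f = reorderedOp S μ}.ncard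
      ≤ (Set.range H).ncard :=
    Set.ncard_le_ncard hsub (Set.finite_range H)
  have h2 : (Set.range H).ncard ≤ Fintype.card ((s : Fin k) → Fin (msz s)) := by
    rw [← Set.image_univ]
    refine le_trans (Set.ncard_image_le Set.finite_univ) ?_
    rw [Set.ncard_univ, Nat.card_eq_fintype_card]
  have h3 : Fintype.card ((s : Fin k) → Fin (msz s)) = ∏ s, msz s := by
    simp [Fintype.card_pi]
  have herase : Finset.univ.erase last = Finset.Iio last := by
    ext x
    have hx := x.isLt
    simp only [Finset.mem_erase, Finset.mem_univ, and_true, Finset.mem_Iio,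
      Fin.lt_def, hlast]
    constructor
    · intro hne
      rcases Nat.lt_or_ge x.val (k - 1) with h | h
      · exact h
      · exact absurd (Fin.ext (show x.val = k - 1 by omega)) hne
    · intro hlt
      intro e
      have hv : x.val = k - 1 := congrArg Fin.val e
      omega
  have h4 : ∏ s, msz s = ∏ j ∈ Finset.Iio last, ℓ j := by
    rw [← Finset.mul_prod_erase Finset.univ msz (Finset.mem_univ last)]
    have : msz last = 1 := by simp [hmsz]
    rw [this, one_mul, herase]
    refine Finset.prod_congr rfl ?_
    intro x hx
    simp only [hmsz]
    rw [if_neg]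
    rw [Finset.mem_Iio] at hx
    exact ne_of_lt hx
  calc _ ≤ (Set.range H).ncard := h1
    _ ≤ Fintype.card ((s : Fin k) → Fin (msz s)) := h2
    _ = ∏ s, msz s := h3
    _ = ∏ j ∈ Finset.Iio last, ℓ j := h4
end

section
/- Let Q be a finite connected quandle of order n with its elements {1,2,…,n} naturally ordered and with profile {1, n-1} or with profile {1, 1, n-2}. Then the set of all automorphisms of Q coincides with the set of all natural reorderings of Q: a bijection ν of {1,2,…,n} is an automorphism of Q if and only if ν is a natural reordering with respect to r_{ν^{-1}(n)}. -/
theorem Equiv.Perm.apply_inv_self {α : Type*} (f : Equiv.Perm α) (x : α) : f (f⁻¹ x) = x :=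
  f.apply_symm_apply x

namespace QuandleOp

lemma r_apply_s5 {Q : Type*} (S : QuandleOp Q) (b a : Q) : S.r b a = S.op a b := rfl

def auts {Q : Type*} (S : QuandleOp Q) : Subgroup (Equiv.Perm Q) where
  carrier := {σ | ∀ a b, σ (S.op a b) = S.op (σ a) (σ b)}
  one_mem' := fun _ _ => rfl
  mul_mem' := by
    intro f g hf hg a b
    simp only [Equiv.Perm.coe_mul, Function.comp_apply]
    rw [hg, hf]
  inv_mem' := by
    intro f hf a b
    apply f.injective
    rw [hf, Equiv.Perm.apply_inv_self, Equiv.Perm.apply_inv_self, Equiv.Perm.apply_inv_self]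

lemma mem_auts {Q : Type*} {S : QuandleOp Q} {σ : Equiv.Perm Q} :
    σ ∈ S.auts ↔ ∀ a b, σ (S.op a b) = S.op (σ a) (σ b) := Iff.rfl

lemma closure_le_auts {Q : Type*} (S : QuandleOp Q) :
    Subgroup.closure (Set.range S.r) ≤ S.auts :=
  (Subgroup.closure_le _).mpr (by rintro _ ⟨b, rfl⟩ a c; exact S.op_distrib a c b)

lemma fixq {Q : Type*} (S : QuandleOp Q) (q : Q) (d : ℕ) : ((S.r q) ^ d) q = q := by
  induction d with
  | zero => simp
  | succ d ih => rw [pow_succ, Equiv.Perm.mul_apply, r_apply_s5, S.op_self, ih]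

lemma conj_pow {Q : Type*} (S : QuandleOp Q) {g : Equiv.Perm Q} {b q : Q}
    (gaut : ∀ a c, g (S.op a c) = S.op (g a) (g c)) (hgb : g b = q) :
    ∀ (d : ℕ) (x : Q), g (((S.r b) ^ d) x) = ((S.r q) ^ d) (g x) := by
  intro d
  induction d with
  | zero => intro x; simp
  | succ d ih =>
    intro x
    rw [pow_succ, pow_succ, Equiv.Perm.mul_apply, Equiv.Perm.mul_apply, ih, r_apply_s5, r_apply_s5,
      gaut, hgb]

end QuandleOp

lemma mod_shift_ne {t d m : ℕ} (ht : t < m) (hd0 : 0 < d) (hdm : d < m)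
    (h : (t + d) % m = t) : False := by
  rcases Nat.lt_or_ge (t + d) m with h' | h'
  · rw [Nat.mod_eq_of_lt h'] at h; omega
  · rw [Nat.mod_eq_sub_mod h', Nat.mod_eq_of_lt (by omega)] at h; omega

lemma three_in_pair {α : Type*} {a b y1 y2 y3 : α} (h1 : y1 = a ∨ y1 = b)
    (h2 : y2 = a ∨ y2 = b) (h3 : y3 = a ∨ y3 = b) (d12 : y1 ≠ y2) (d13 : y1 ≠ y3)
    (d23 : y2 ≠ y3) : False := by
  rcases h1 with rfl | rfl <;> rcases h2 with h2 | h2 <;> rcases h3 with h3 | h3 <;> simp_all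

lemma sigma_inj {k : ℕ} {ℓ : Fin k → ℕ} {β : Type*} {I : (s : Fin k) → Fin (ℓ s) → β}
    (h : Function.Injective fun p : (s : Fin k) × Fin (ℓ s) => I p.1 p.2)
    {s : Fin k} {a b : Fin (ℓ s)} (hab : I s a = I s b) : a = b := by
  have h2 := h (a₁ := ⟨s, a⟩) (a₂ := ⟨s, b⟩) hab
  exact eq_of_heq (Sigma.mk.inj_iff.mp h2).2

lemma Iio_zero_fin {k : ℕ} (h : 0 < k) : Finset.Iio (⟨0, h⟩ : Fin k) = ∅ := by
  ext x; simp [Finset.mem_Iio, Fin.lt_def]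

lemma r_pow_apply {n : ℕ} (S : QuandleOp (Fin n)) (q : Fin n) {k : ℕ} {ℓ : Fin k → ℕ}
    {I : (s : Fin k) → Fin (ℓ s) → Fin n}
    (h7 : ∀ (s : Fin k) (t : Fin (ℓ s)),
      S.op (I s t) q = I s ⟨(t.val + 1) % ℓ s, Nat.mod_lt _ (Nat.zero_lt_of_lt t.isLt)⟩)
    (s : Fin k) (t : Fin (ℓ s)) (d : ℕ) :
    ((S.r q) ^ d) (I s t) = I s ⟨(t.val + d) % ℓ s, Nat.mod_lt _ (Nat.zero_lt_of_lt t.isLt)⟩ := by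
  induction d generalizing t with
  | zero =>
    simp only [pow_zero, Equiv.Perm.coe_one, id_eq]
    exact congrArg (I s) (Fin.ext (by simp [Nat.mod_eq_of_lt t.isLt]))
  | succ d ih =>
    rw [pow_succ, Equiv.Perm.mul_apply, QuandleOp.r_apply_s5, h7 s t, ih]
    apply congrArg (I s)
    apply Fin.ext
    show ((t.1 + 1) % ℓ s + d) % ℓ s = (t.1 + (d + 1)) % ℓ s
    rw [Nat.mod_add_mod]
    congr 1
    omega

lemma I_surj {n : ℕ} [NeZero n] {k : ℕ} (q : Fin n) (ℓ : Fin k → ℕ)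
    (I : (s : Fin k) → Fin (ℓ s) → Fin n)
    (hinj : Function.Injective fun p : (s : Fin k) × Fin (ℓ s) => I p.1 p.2)
    (hne : ∀ s t, I s t ≠ q) (hsum : (∑ s, ℓ s) = n - 1) :
    ∀ y : Fin n, y ≠ q → ∃ s t, I s t = y := by
  classical
  intro y hy
  have hsub : (Finset.univ.image fun p : (s : Fin k) × Fin (ℓ s) => I p.1 p.2) ⊆
      Finset.univ.erase q := by
    intro x hx
    simp only [Finset.mem_image] at hx
    obtain ⟨p, -, rfl⟩ := hx
    exact Finset.mem_erase.mpr ⟨hne p.1 p.2, Finset.mem_univ _⟩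
  have hcard : (Finset.univ.erase q).card ≤
      (Finset.univ.image fun p : (s : Fin k) × Fin (ℓ s) => I p.1 p.2).card := by
    rw [Finset.card_image_of_injective _ hinj, Finset.card_erase_of_mem (Finset.mem_univ _),
      Finset.card_univ, Finset.card_univ, Fintype.card_fin, Fintype.card_sigma]
    simp [hsum]
  have heq := Finset.eq_of_subset_of_card_le hsub hcard
  have hy' : y ∈ Finset.univ.image fun p : (s : Fin k) × Fin (ℓ s) => I p.1 p.2 := by
    rw [heq]; exact Finset.mem_erase.mpr ⟨hy, Finset.mem_univ _⟩
  simp only [Finset.mem_image] at hy'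
  obtain ⟨p, -, hp⟩ := hy'
  exact ⟨p.1, p.2, hp⟩

lemma aut_isNRW {n : ℕ} [NeZero n] (S : QuandleOp (Fin n)) {k : ℕ} {ℓ : Fin k → ℕ}
    {I' : (s : Fin k) → Fin (ℓ s) → Fin n}
    (h : IsNaturalReorderingWith S (theTop n) (Equiv.refl (Fin n)) ℓ I')
    (ν : Equiv.Perm (Fin n)) (hν : ∀ a b, ν (S.op a b) = S.op (ν a) (ν b)) :
    IsNaturalReorderingWith S (ν.symm (theTop n)) ν ℓ (fun s t => ν.symm (I' s t)) := by
  obtain ⟨h1, h2, h3, h4, h5, h6, h7, h8⟩ := h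
  refine ⟨by simp [theTop], h2, h3, h4, ?_, ?_, ?_, ?_⟩
  · intro p p' hpp
    exact h5 (ν.symm.injective hpp)
  · intro s t hst
    exact h6 s t (ν.symm.injective hst)
  · intro s t
    apply ν.injective
    rw [hν, Equiv.apply_symm_apply, Equiv.apply_symm_apply, Equiv.apply_symm_apply, h7]
  · intro s t
    rw [Equiv.apply_symm_apply]
    simpa using h8 s t

lemma succ_mod_eq_zero {m a : ℕ} (hm : m = 1) : (a + 1) % m = 0 := by subst hm; omega

lemma succ_mod_eq_self {m a : ℕ} (hm : m = 1) (ha : a < m) : (a + 1) % m = a := by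
  subst hm; omega

/-- Corollary of the paper: let the elements of a finite connected
quandle on `{1,…,n}` be naturally ordered, with profile `{1, n-1}` or `{1, 1, n-2}`.
Then the automorphisms of the quandle are exactly the natural reorderings: a bijection
`ν` is an automorphism if and only if it is a natural reordering with respect to
`r (ν⁻¹ n)`. -/
theorem automorphisms_eq_natural_reorderings
    {n : ℕ} [NeZero n] (S : QuandleOp (Fin n)) (hconn : S.Connected)
    (hord : NaturallyOrderedWith S (fun _ : Fin 1 => n - 1) ∨
            NaturallyOrderedWith S ![1, n - 2]) :
    ∀ ν : Equiv.Perm (Fin n),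
      (∀ a b, ν (S.op a b) = S.op (ν a) (ν b)) ↔
        IsNaturalReordering S (ν.symm (theTop n)) ν := by
  intro ν
  constructor
  · intro hν
    rcases hord with ⟨I', h'⟩ | ⟨I', h'⟩
    · exact ⟨1, _, _, aut_isNRW S h' ν hν⟩
    · exact ⟨2, _, _, aut_isNRW S h' ν hν⟩
  · rintro ⟨k, ℓ, I, hν1, h2, h3, h4, h5, h6, h7, h8⟩
    have hq : ν (ν.symm (theTop n)) = theTop n := ν.apply_symm_apply _
    have hqq : S.op (ν.symm (theTop n)) (ν.symm (theTop n)) = ν.symm (theTop n) := S.op_self _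
    have hclass : ∀ y : Fin n, y = ν.symm (theTop n) ∨ ∃ s t, I s t = y := by
      intro y
      by_cases hy : y = ν.symm (theTop n)
      · exact Or.inl hy
      · exact Or.inr (I_surj _ ℓ I h5 h6 h4 y hy)
    rcases hord with ⟨I', h'⟩ | ⟨I', h'⟩
    -- ###################### CASE 1 : profile {1, n-1} ######################
    · obtain ⟨h'1, h'2, h'3, h'4, h'5, h'6, h'7, h'8⟩ := h'
      have hm1 : 1 ≤ n - 1 := h'2 0
      have hIio1 : Finset.Iio (0 : Fin 1) = ∅ := by decide
      have hval' : ∀ t : Fin (n-1), (I' 0 t).val = t.val := by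
        intro t
        have h := h'8 0 t
        rw [hIio1, Finset.sum_empty] at h
        simpa using h
      have surj' : ∀ y : Fin n, y ≠ theTop n → ∃ t : Fin (n-1), I' 0 t = y := by
        intro y hy
        obtain ⟨s, t, hst⟩ := I_surj (theTop n) _ I' h'5 h'6 h'4 y hy
        have hs : s = 0 := Subsingleton.elim s 0
        subst hs
        exact ⟨t, hst⟩
      have hpow' : ∀ (t : Fin (n-1)) (d : ℕ),
          ((S.r (theTop n)) ^ d) (I' 0 t)
            = I' 0 ⟨(t.val + d) % (n-1), Nat.mod_lt _ (Nat.zero_lt_of_lt t.isLt)⟩ :=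
        fun t d => r_pow_apply S _ h'7 0 t d
      have hfix' : ∀ d : ℕ, 0 < d → d < n - 1 → ∀ y : Fin n,
          ((S.r (theTop n)) ^ d) y = y → y = theTop n := by
        intro d hd0 hdm y hy
        by_contra hne
        obtain ⟨t, rfl⟩ := surj' y hne
        rw [hpow' t d] at hy
        exact mod_shift_ne t.isLt hd0 hdm (congrArg Fin.val (sigma_inj h'5 hy))
      obtain ⟨g, hgmem, hgtop⟩ := hconn (theTop n) (ν.symm (theTop n))
      have gaut : ∀ a b, g (S.op a b) = S.op (g a) (g b) :=
        QuandleOp.mem_auts.mp (QuandleOp.closure_le_auts S hgmem)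
      have ginvaut : ∀ a b, g⁻¹ (S.op a b) = S.op (g⁻¹ a) (g⁻¹ b) :=
        QuandleOp.mem_auts.mp (S.auts.inv_mem (QuandleOp.closure_le_auts S hgmem))
      have hcp := QuandleOp.conj_pow S gaut hgtop
      have F : ∀ (d : ℕ) (x : Fin n), ν (((S.r (ν.symm (theTop n))) ^ d) (ν.symm x)) = x →
          ((S.r (theTop n)) ^ d) (g⁻¹ (ν.symm x)) = g⁻¹ (ν.symm x) := by
        intro d x hx
        have hx' : ((S.r (ν.symm (theTop n))) ^ d) (ν.symm x) = ν.symm x := by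
          have h := congrArg ν.symm hx
          rwa [Equiv.symm_apply_apply] at h
        apply g.injective
        rw [hcp, Equiv.Perm.apply_inv_self]
        exact hx'
      have hk0 : 0 < k := by
        by_contra hk
        have hk' : k = 0 := by omega
        subst hk'
        rw [Finset.univ_eq_empty, Finset.sum_empty] at h4
        omega
      have hℓ0 : ℓ ⟨0, hk0⟩ = n - 1 := by
        by_contra hne
        have hle : ℓ ⟨0, hk0⟩ ≤ n - 1 := by
          rw [← h4]
          exact Finset.single_le_sum (f := ℓ) (fun i _ => Nat.zero_le _) (Finset.mem_univ _)
        have hlt : ℓ ⟨0, hk0⟩ < n - 1 := lt_of_le_of_ne hle hne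
        have hd0 : 0 < ℓ ⟨0, hk0⟩ := h2 _
        have hfixtop : ν (((S.r (ν.symm (theTop n))) ^ (ℓ ⟨0, hk0⟩)) (ν.symm (theTop n)))
            = theTop n := by
          rw [QuandleOp.fixq]; exact hq
        have htop1 := hfix' _ hd0 hlt _ (F _ _ hfixtop)
        have hcyc : ((S.r (ν.symm (theTop n))) ^ (ℓ ⟨0, hk0⟩)) (I ⟨0, hk0⟩ ⟨0, hd0⟩)
            = I ⟨0, hk0⟩ ⟨0, hd0⟩ := by
          rw [r_pow_apply S _ h7]
          exact congrArg (I _) (Fin.ext (by simp))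
        have hfixI : ν (((S.r (ν.symm (theTop n))) ^ (ℓ ⟨0, hk0⟩))
            (ν.symm (ν (I ⟨0, hk0⟩ ⟨0, hd0⟩)))) = ν (I ⟨0, hk0⟩ ⟨0, hd0⟩) := by
          rw [Equiv.symm_apply_apply, hcyc]
        have htop2 := hfix' _ hd0 hlt _ (F _ _ hfixI)
        rw [Equiv.symm_apply_apply] at htop2
        have heq : I ⟨0, hk0⟩ ⟨0, hd0⟩ = ν.symm (theTop n) :=
          Equiv.injective g⁻¹ (htop2.trans htop1.symm)
        exact h6 _ _ heq
      have hk1 : k = 1 := by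
        by_contra hk1
        have hk2 : 1 < k := by omega
        have hne01 : (⟨0, hk0⟩ : Fin k) ≠ ⟨1, hk2⟩ := by simp [Fin.ext_iff]
        have hpair : ℓ ⟨0, hk0⟩ + ℓ ⟨1, hk2⟩ ≤ ∑ s, ℓ s := by
          rw [← Finset.sum_pair hne01]
          exact Finset.sum_le_sum_of_subset (Finset.subset_univ _)
        rw [h4] at hpair
        have := h2 ⟨1, hk2⟩
        omega
      subst hk1
      have hl0' : ℓ 0 = n - 1 := by
        rw [show (0 : Fin 1) = ⟨0, hk0⟩ from Fin.ext rfl]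
        exact hℓ0
      have hIioK : Finset.Iio (⟨0, hk0⟩ : Fin 1) = ∅ := Iio_zero_fin hk0
      have hval : ∀ t, (ν (I ⟨0, hk0⟩ t)).val = t.val := by
        intro t
        have h := h8 ⟨0, hk0⟩ t
        rw [hIioK, Finset.sum_empty] at h
        simpa using h
      have htau : ∀ x : Fin n, ν (S.op x (ν.symm (theTop n))) = S.op (ν x) (theTop n) := by
        intro x
        rcases hclass x with rfl | ⟨s, t, rfl⟩
        · rw [hqq, hq, S.op_self]
        · obtain rfl : s = ⟨0, hk0⟩ := Subsingleton.elim _ _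
          rw [h7]
          have hlt : t.val < n - 1 := by rw [← hℓ0]; exact t.isLt
          have hEq : ν (I ⟨0, hk0⟩ t) = I' 0 ⟨t.val, hlt⟩ := by
            apply Fin.val_injective
            rw [hval, hval']
          rw [hEq, h'7]
          apply Fin.val_injective
          rw [hval, hval']
          simp [hℓ0, hl0']
      have hσtop : ν (g (theTop n)) = theTop n := by rw [hgtop, hq]
      have hone : ∀ y, ν (g (S.r (theTop n) y)) = S.r (theTop n) (ν (g y)) := by
        intro y
        rw [QuandleOp.r_apply_s5, QuandleOp.r_apply_s5, gaut, hgtop, htau]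
      have hσcomm : ∀ (d : ℕ) (y : Fin n),
          ν (g (((S.r (theTop n)) ^ d) y)) = ((S.r (theTop n)) ^ d) (ν (g y)) := by
        intro d
        induction d with
        | zero => intro y; simp
        | succ d ih =>
          intro y
          rw [pow_succ, Equiv.Perm.mul_apply, ih, hone, Equiv.Perm.mul_apply]
      have hx0ne : ν (g (I' 0 ⟨0, hm1⟩)) ≠ theTop n := by
        intro h
        rw [← hσtop] at h
        exact h'6 0 _ (g.injective (ν.injective h))
      obtain ⟨j, hj⟩ := surj' _ hx0ne
      have hsig : ∀ y : Fin n, ν (g y) = ((S.r (theTop n)) ^ j.val) y := by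
        intro y
        by_cases hy : y = theTop n
        · subst hy; rw [hσtop, QuandleOp.fixq]
        · obtain ⟨t, rfl⟩ := surj' y hy
          have h1 : I' 0 t = ((S.r (theTop n)) ^ t.val) (I' 0 ⟨0, hm1⟩) := by
            rw [hpow']
            exact congrArg (I' 0) (Fin.ext (by simp [Nat.mod_eq_of_lt t.isLt]))
          rw [h1, hσcomm, ← hj, hpow', hpow', hpow']
          apply congrArg (I' 0)
          apply Fin.ext
          simp [Nat.mod_add_mod, Nat.add_comm]
      have hρaut' : ∀ a b, ((S.r (theTop n)) ^ j.val) (S.op a b)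
          = S.op (((S.r (theTop n)) ^ j.val) a) (((S.r (theTop n)) ^ j.val) b) :=
        QuandleOp.mem_auts.mp
          (pow_mem (QuandleOp.closure_le_auts S (Subgroup.subset_closure (Set.mem_range_self _))) _)
      intro a b
      calc ν (S.op a b) = ν (g (g⁻¹ (S.op a b))) := by rw [Equiv.Perm.apply_inv_self]
        _ = ((S.r (theTop n)) ^ j.val) (g⁻¹ (S.op a b)) := hsig _
        _ = ((S.r (theTop n)) ^ j.val) (S.op (g⁻¹ a) (g⁻¹ b)) := by rw [ginvaut]
        _ = S.op (((S.r (theTop n)) ^ j.val) (g⁻¹ a)) (((S.r (theTop n)) ^ j.val) (g⁻¹ b)) :=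
            hρaut' _ _
        _ = S.op (ν (g (g⁻¹ a))) (ν (g (g⁻¹ b))) := by rw [hsig, hsig]
        _ = S.op (ν a) (ν b) := by rw [Equiv.Perm.apply_inv_self, Equiv.Perm.apply_inv_self]
    -- ###################### CASE 2 : profile {1, 1, n-2} ######################
    · obtain ⟨h'1, h'2, h'3, h'4, h'5, h'6, h'7, h'8⟩ := h'
      have hc : (![1, n-2] : Fin 2 → ℕ) 1 = n - 2 := by simp
      have hb0 : (![1, n-2] : Fin 2 → ℕ) 0 = 1 := rfl
      have hc1 : 1 ≤ n - 2 := by simpa using h'2 1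
      have hn3 : 3 ≤ n := by
        have := Nat.pos_of_ne_zero (NeZero.ne n); omega
      have hIio'0 : Finset.Iio (0 : Fin 2) = ∅ := by decide
      have hIio'1 : Finset.Iio (1 : Fin 2) = {0} := by decide
      have hval'0 : ∀ t, (I' 0 t).val = 0 := by
        intro t
        have h := h'8 0 t
        rw [hIio'0, Finset.sum_empty] at h
        have ht : t.val = 0 := by have h := t.isLt; omega
        simpa [ht] using h
      have hval'1 : ∀ t, (I' 1 t).val = 1 + t.val := by
        intro t
        have h := h'8 1 t
        rw [hIio'1, Finset.sum_singleton] at h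
        simpa using h
      have h0lt1 : 0 < ![1, n-2] 0 := by simp
      have h0ltc : 0 < ![1, n-2] 1 := by rw [hc]; omega
      have hop'0 : S.op (I' 0 ⟨0, h0lt1⟩) (theTop n) = I' 0 ⟨0, h0lt1⟩ := by
        rw [h'7]
        exact congrArg (I' 0) (Fin.ext (by simp))
      have surj2' : ∀ y : Fin n, y ≠ theTop n → ∃ s t, I' s t = y :=
        I_surj (theTop n) _ I' h'5 h'6 h'4
      have hclass' : ∀ y : Fin n, y = theTop n ∨ y = I' 0 ⟨0, h0lt1⟩ ∨ ∃ t, I' 1 t = y := by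
        intro y
        by_cases hy : y = theTop n
        · exact Or.inl hy
        · obtain ⟨s, t, hst⟩ := surj2' y hy
          rcases (by have := s.isLt; omega : s.val = 0 ∨ s.val = 1) with hs | hs
          · obtain rfl : s = 0 := Fin.ext (by simp [hs])
            refine Or.inr (Or.inl ?_)
            rw [← hst]
            exact congrArg (I' 0) (Fin.ext (by
              show t.val = 0
              have h := t.isLt; omega))
          · obtain rfl : s = 1 := Fin.ext (by simp [hs])
            exact Or.inr (Or.inr ⟨t, hst⟩)
      have hpow'1 : ∀ (t : Fin (![1, n-2] 1)) (d : ℕ),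
          ((S.r (theTop n)) ^ d) (I' 1 t)
            = I' 1 ⟨(t.val + d) % ![1, n-2] 1, Nat.mod_lt _ (Nat.zero_lt_of_lt t.isLt)⟩ :=
        fun t d => r_pow_apply S _ h'7 1 t d
      have hpow'0 : ∀ d : ℕ, ((S.r (theTop n)) ^ d) (I' 0 ⟨0, h0lt1⟩) = I' 0 ⟨0, h0lt1⟩ := by
        intro d
        rw [r_pow_apply S _ h'7 0]
        exact congrArg (I' 0) (Fin.ext (by simp [Nat.mod_one]))
      have hfix2' : ∀ d : ℕ, 0 < d → d < n - 2 → ∀ y : Fin n,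
          ((S.r (theTop n)) ^ d) y = y → y = theTop n ∨ y = I' 0 ⟨0, h0lt1⟩ := by
        intro d hd0 hdm y hy
        rcases hclass' y with rfl | rfl | ⟨t, rfl⟩
        · exact Or.inl rfl
        · exact Or.inr rfl
        · exfalso
          rw [hpow'1 t d] at hy
          exact mod_shift_ne t.isLt hd0 (by rw [hc]; exact hdm)
            (congrArg Fin.val (sigma_inj h'5 hy))
      rcases Nat.lt_or_ge 1 (n - 2) with hc2 | hcle
      · -- main subcase : n ≥ 4
        obtain ⟨g, hgmem, hgtop⟩ := hconn (theTop n) (ν.symm (theTop n))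
        have gaut : ∀ a b, g (S.op a b) = S.op (g a) (g b) :=
          QuandleOp.mem_auts.mp (QuandleOp.closure_le_auts S hgmem)
        have ginvaut : ∀ a b, g⁻¹ (S.op a b) = S.op (g⁻¹ a) (g⁻¹ b) :=
          QuandleOp.mem_auts.mp (S.auts.inv_mem (QuandleOp.closure_le_auts S hgmem))
        have hcp := QuandleOp.conj_pow S gaut hgtop
        have F : ∀ (d : ℕ) (x : Fin n), ν (((S.r (ν.symm (theTop n))) ^ d) (ν.symm x)) = x →
            ((S.r (theTop n)) ^ d) (g⁻¹ (ν.symm x)) = g⁻¹ (ν.symm x) := by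
          intro d x hx
          have hx' : ((S.r (ν.symm (theTop n))) ^ d) (ν.symm x) = ν.symm x := by
            have h := congrArg ν.symm hx
            rwa [Equiv.symm_apply_apply] at h
          apply g.injective
          rw [hcp, Equiv.Perm.apply_inv_self]
          exact hx'
        have G : ∀ d : ℕ, 0 < d → d < n - 2 → ∀ x : Fin n,
            ν (((S.r (ν.symm (theTop n))) ^ d) (ν.symm x)) = x →
            g⁻¹ (ν.symm x) = theTop n ∨ g⁻¹ (ν.symm x) = I' 0 ⟨0, h0lt1⟩ :=
          fun d hd0 hdm x hx => hfix2' d hd0 hdm _ (F d x hx)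
        have hfixtop : ∀ d : ℕ,
            ν (((S.r (ν.symm (theTop n))) ^ d) (ν.symm (theTop n))) = theTop n := by
          intro d; rw [QuandleOp.fixq]; exact hq
        have pfix : ∀ (s : Fin k) (d : ℕ), ((0 : ℕ) + d) % ℓ s = 0 →
            ν (((S.r (ν.symm (theTop n))) ^ d) (ν.symm (ν (I s ⟨0, h2 s⟩))))
              = ν (I s ⟨0, h2 s⟩) := by
          intro s d hd
          rw [Equiv.symm_apply_apply, r_pow_apply S _ h7]
          exact congrArg (fun u => ν (I s u)) (Fin.ext hd)
        have hk0 : 0 < k := by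
          by_contra hk
          have hk' : k = 0 := by omega
          subst hk'
          rw [Finset.univ_eq_empty, Finset.sum_empty] at h4
          omega
        have hℓ00 : ℓ ⟨0, hk0⟩ = 1 := by
          by_contra hne0
          have hall : ∀ s, 2 ≤ ℓ s := by
            intro s
            have hmono := h3 (show (⟨0, hk0⟩ : Fin k) ≤ s by simp [Fin.le_def])
            have := h2 ⟨0, hk0⟩
            omega
          have honly : ∀ x : Fin n,
              S.op x (ν.symm (theTop n)) = x → x = ν.symm (theTop n) := by
            intro x hx
            rcases hclass x with rfl | ⟨s, t, rfl⟩
            · rfl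
            · exfalso
              rw [h7] at hx
              have hvaleq := congrArg Fin.val (sigma_inj h5 hx)
              exact mod_shift_ne t.isLt Nat.one_pos (by have := hall s; omega) hvaleq
          have he0fix : S.op (g (I' 0 ⟨0, h0lt1⟩)) (ν.symm (theTop n))
              = g (I' 0 ⟨0, h0lt1⟩) := by
            rw [← hgtop, ← gaut, hop'0]
          have h1 := honly _ he0fix
          exact h'6 0 _ (g.injective (h1.trans hgtop.symm))
        have hk2 : 2 ≤ k := by
          by_contra hk
          have hk' : k = 1 := by omega
          subst hk'
          have h40 : ∑ s : Fin 1, ℓ s = ℓ ⟨0, hk0⟩ := by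
            rw [Fin.sum_univ_one]
            exact congrArg ℓ (Fin.ext (by simp))
          rw [h40] at h4
          omega
        have huniq : ∀ s : Fin k, s ≠ ⟨0, hk0⟩ → 2 ≤ ℓ s := by
          intro s hs
          by_contra hsl
          have hs1 : ℓ s = 1 := by have := h2 s; omega
          have hx1 := hfixtop 1
          have hx2 := pfix ⟨0, hk0⟩ 1 (by rw [hℓ00])
          have hx3 := pfix s 1 (by rw [hs1])
          have y1 := G 1 Nat.one_pos hc2 _ hx1
          have y2 := G 1 Nat.one_pos hc2 _ hx2
          have y3 := G 1 Nat.one_pos hc2 _ hx3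
          refine three_in_pair y1 y2 y3 ?_ ?_ ?_
          · intro h
            have h1 := Equiv.injective g⁻¹ h
            rw [Equiv.symm_apply_apply] at h1
            exact h6 _ _ h1.symm
          · intro h
            have h1 := Equiv.injective g⁻¹ h
            rw [Equiv.symm_apply_apply] at h1
            exact h6 _ _ h1.symm
          · intro h
            have h1 := Equiv.injective g⁻¹ h
            rw [Equiv.symm_apply_apply, Equiv.symm_apply_apply] at h1
            have h2' := h5 (a₁ := ⟨⟨0, hk0⟩, ⟨0, h2 _⟩⟩) (a₂ := ⟨s, ⟨0, h2 s⟩⟩) h1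
            exact hs (congrArg Sigma.fst h2').symm
        have hk2' : k = 2 := by
          by_contra hne
          have hk3 : 2 < k := by omega
          have h1k : 1 < k := by omega
          have hd2' : 2 ≤ ℓ ⟨2, hk3⟩ := huniq _ (by simp [Fin.ext_iff])
          have hd2 : 2 ≤ ℓ ⟨1, h1k⟩ := huniq _ (by simp [Fin.ext_iff])
          have hsum3 : ℓ ⟨0, hk0⟩ + (ℓ ⟨1, h1k⟩ + ℓ ⟨2, hk3⟩) ≤ ∑ s, ℓ s := by
            rw [← Finset.sum_pair (show (⟨1, h1k⟩ : Fin k) ≠ ⟨2, hk3⟩ by simp [Fin.ext_iff]),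
              ← Finset.sum_insert
                (show (⟨0, hk0⟩ : Fin k) ∉ ({⟨1, h1k⟩, ⟨2, hk3⟩} : Finset (Fin k)) by
                  simp [Fin.ext_iff])]
            exact Finset.sum_le_sum_of_subset (Finset.subset_univ _)
          rw [h4] at hsum3
          have hdlt : ℓ ⟨1, h1k⟩ < n - 2 := by omega
          have hx1 := hfixtop (ℓ ⟨1, h1k⟩)
          have hx2 := pfix ⟨0, hk0⟩ (ℓ ⟨1, h1k⟩) (by rw [hℓ00]; simp [Nat.mod_one])
          have hx3 := pfix ⟨1, h1k⟩ (ℓ ⟨1, h1k⟩) (by simp)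
          have y1 := G _ (by omega) hdlt _ hx1
          have y2 := G _ (by omega) hdlt _ hx2
          have y3 := G _ (by omega) hdlt _ hx3
          refine three_in_pair y1 y2 y3 ?_ ?_ ?_
          · intro h
            have h1 := Equiv.injective g⁻¹ h
            rw [Equiv.symm_apply_apply] at h1
            exact h6 _ _ h1.symm
          · intro h
            have h1 := Equiv.injective g⁻¹ h
            rw [Equiv.symm_apply_apply] at h1
            exact h6 _ _ h1.symm
          · intro h
            have h1 := Equiv.injective g⁻¹ h
            rw [Equiv.symm_apply_apply, Equiv.symm_apply_apply] at h1
            have h2' := h5 (a₁ := ⟨⟨0, hk0⟩, ⟨0, h2 _⟩⟩) (a₂ := ⟨⟨1, h1k⟩, ⟨0, h2 _⟩⟩) h1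
            exact absurd (congrArg Sigma.fst h2') (by simp [Fin.ext_iff])
        subst hk2'
        have hL0 : ℓ 0 = 1 := by
          rw [show (0 : Fin 2) = ⟨0, hk0⟩ from Fin.ext rfl]
          exact hℓ00
        have hL1 : ℓ 1 = n - 2 := by
          have h42 : ℓ 0 + ℓ 1 = n - 1 := by rw [← Fin.sum_univ_two]; exact h4
          omega
        have hval0 : ∀ t : Fin (ℓ 0), (ν (I 0 t)).val = t.val := by
          intro t
          have h := h8 0 t
          rw [hIio'0, Finset.sum_empty] at h
          simpa using h
        have hval1 : ∀ t : Fin (ℓ 1), (ν (I 1 t)).val = 1 + t.val := by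
          intro t
          have h := h8 1 t
          rw [hIio'1, Finset.sum_singleton, hL0] at h
          exact h
        have htau : ∀ x : Fin n, ν (S.op x (ν.symm (theTop n))) = S.op (ν x) (theTop n) := by
          intro x
          rcases hclass x with rfl | ⟨s, t, rfl⟩
          · rw [hqq, hq, S.op_self]
          · rcases (by have := s.isLt; omega : s.val = 0 ∨ s.val = 1) with hs | hs
            · obtain rfl : s = 0 := Fin.ext (by simp [hs])
              have ht0 : t.val = 0 := by have h := t.isLt; omega
              have hEq : ν (I 0 t) = I' 0 ⟨0, h0lt1⟩ := by
                apply Fin.val_injective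
                rw [hval0, hval'0]
                exact ht0
              rw [h7, hEq, hop'0]
              apply Fin.val_injective
              rw [hval0, hval'0]
              show (t.val + 1) % ℓ 0 = 0
              exact succ_mod_eq_zero hL0
            · obtain rfl : s = 1 := Fin.ext (by simp [hs])
              have htlt : t.val < n - 2 := by have h := t.isLt; omega
              have htlt2 : t.val < ![1, n - 2] 1 := by rw [hc]; exact htlt
              have hEq : ν (I 1 t) = I' 1 ⟨t.val, htlt2⟩ := by
                apply Fin.val_injective
                rw [hval1, hval'1]
              rw [h7, hEq, h'7]
              apply Fin.val_injective
              rw [hval1, hval'1]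
              simp [hL1, hc]
        have hσtop : ν (g (theTop n)) = theTop n := by rw [hgtop, hq]
        have hone : ∀ y, ν (g (S.r (theTop n) y)) = S.r (theTop n) (ν (g y)) := by
          intro y
          rw [QuandleOp.r_apply_s5, QuandleOp.r_apply_s5, gaut, hgtop, htau]
        have hσcomm : ∀ (d : ℕ) (y : Fin n),
            ν (g (((S.r (theTop n)) ^ d) y)) = ((S.r (theTop n)) ^ d) (ν (g y)) := by
          intro d
          induction d with
          | zero => intro y; simp
          | succ d ih =>
            intro y
            rw [pow_succ, Equiv.Perm.mul_apply, ih, hone, Equiv.Perm.mul_apply]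
        have hσe0 : ν (g (I' 0 ⟨0, h0lt1⟩)) = I' 0 ⟨0, h0lt1⟩ := by
          have hfx : ((S.r (theTop n)) ^ 1) (ν (g (I' 0 ⟨0, h0lt1⟩)))
              = ν (g (I' 0 ⟨0, h0lt1⟩)) := by
            rw [← hσcomm 1, hpow'0]
          rcases hfix2' 1 Nat.one_pos hc2 _ hfx with h | h
          · exfalso
            rw [← hσtop] at h
            exact h'6 0 _ (g.injective (ν.injective h))
          · exact h
        have hσe1top : ν (g (I' 1 ⟨0, h0ltc⟩)) ≠ theTop n := by
          intro h
          rw [← hσtop] at h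
          exact h'6 1 _ (g.injective (ν.injective h))
        obtain ⟨s', u, hu⟩ := surj2' _ hσe1top
        have hs'1 : s' = 1 := by
          rcases (by have := s'.isLt; omega : s'.val = 0 ∨ s'.val = 1) with hs | hs
          · exfalso
            obtain rfl : s' = 0 := Fin.ext (by simp [hs])
            have hu0 : I' 0 u = I' 0 ⟨0, h0lt1⟩ := by
              apply congrArg (I' 0)
              apply Fin.ext
              show u.val = 0
              have h := u.isLt; omega
            rw [hu0] at hu
            have h1 : ν (g (I' 1 ⟨0, h0ltc⟩)) = ν (g (I' 0 ⟨0, h0lt1⟩)) :=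
              hu.symm.trans hσe0.symm
            have h2' := g.injective (ν.injective h1)
            have h3' := congrArg Fin.val h2'
            rw [hval'1, hval'0] at h3'
            omega
          · exact Fin.ext (by simp [hs])
        subst hs'1
        have hsig : ∀ y : Fin n, ν (g y) = ((S.r (theTop n)) ^ u.val) y := by
          intro y
          rcases hclass' y with rfl | rfl | ⟨t, rfl⟩
          · rw [hσtop, QuandleOp.fixq]
          · rw [hσe0, hpow'0]
          · have h1 : I' 1 t = ((S.r (theTop n)) ^ t.val) (I' 1 ⟨0, h0ltc⟩) := by
              rw [hpow'1]
              exact congrArg (I' 1)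
                (Fin.ext (show ((0 : ℕ) + t.val) % ![1, n - 2] 1 = t.val by
                  rw [Nat.zero_add, Nat.mod_eq_of_lt t.isLt]).symm)
            rw [h1, hσcomm, ← hu, hpow'1, hpow'1, hpow'1]
            apply congrArg (I' 1)
            apply Fin.ext
            simp [Nat.mod_add_mod, Nat.add_comm]
        have hρaut' : ∀ a b, ((S.r (theTop n)) ^ u.val) (S.op a b)
            = S.op (((S.r (theTop n)) ^ u.val) a) (((S.r (theTop n)) ^ u.val) b) :=
          QuandleOp.mem_auts.mp
            (pow_mem
              (QuandleOp.closure_le_auts S (Subgroup.subset_closure (Set.mem_range_self _))) _)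
        intro a b
        calc ν (S.op a b) = ν (g (g⁻¹ (S.op a b))) := by rw [Equiv.Perm.apply_inv_self]
          _ = ((S.r (theTop n)) ^ u.val) (g⁻¹ (S.op a b)) := hsig _
          _ = ((S.r (theTop n)) ^ u.val) (S.op (g⁻¹ a) (g⁻¹ b)) := by rw [ginvaut]
          _ = S.op (((S.r (theTop n)) ^ u.val) (g⁻¹ a)) (((S.r (theTop n)) ^ u.val) (g⁻¹ b)) :=
              hρaut' _ _
          _ = S.op (ν (g (g⁻¹ a))) (ν (g (g⁻¹ b))) := by rw [hsig, hsig]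
          _ = S.op (ν a) (ν b) := by rw [Equiv.Perm.apply_inv_self, Equiv.Perm.apply_inv_self]
      · -- degenerate subcase n = 3 : contradicts connectedness
        exfalso
        have hceq : n - 2 = 1 := by omega
        have hid : ∀ y : Fin n, S.op y (theTop n) = y := by
          intro y
          rcases hclass' y with rfl | rfl | ⟨t, rfl⟩
          · exact S.op_self _
          · exact hop'0
          · rw [h'7]
            refine congrArg (I' 1) (Fin.ext ?_)
            show (t.val + 1) % ![1, n - 2] 1 = t.val
            exact succ_mod_eq_self (hc.trans hceq) t.isLt
        have hrb : ∀ b x : Fin n, S.op x b = x := by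
          intro b x
          obtain ⟨g, hgmem, hgb⟩ := hconn (theTop n) b
          have gaut : ∀ a c, g (S.op a c) = S.op (g a) (g c) :=
            QuandleOp.mem_auts.mp (QuandleOp.closure_le_auts S hgmem)
          calc S.op x b = S.op (g (g⁻¹ x)) (g (theTop n)) := by
                rw [Equiv.Perm.apply_inv_self, hgb]
            _ = g (S.op (g⁻¹ x) (theTop n)) := (gaut _ _).symm
            _ = g (g⁻¹ x) := by rw [hid]
            _ = x := Equiv.Perm.apply_inv_self _ _
        have hr1 : ∀ b : Fin n, S.r b = 1 := by
          intro b
          ext x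
          simp [QuandleOp.r_apply_s5, hrb]
        obtain ⟨gg, hggmem, hgg⟩ := hconn (I' 0 ⟨0, h0lt1⟩) (theTop n)
        have hbot : Subgroup.closure (Set.range S.r) ≤ ⊥ := by
          rw [Subgroup.closure_le]
          rintro _ ⟨b, rfl⟩
          rw [hr1 b, SetLike.mem_coe]
          exact one_mem ⊥
        have hgg1 : gg = 1 := by
          have := hbot hggmem
          simpa [Subgroup.mem_bot] using this
        rw [hgg1] at hgg
        exact h'6 0 _ (by simpa using hgg)
end
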